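/- The fundamental group of the Möbius band is isomorphic to the additive group of integers: π₁(M, m₀) ≅ ℤ, where M is the Möbius band and m₀ is the class of the point (0, 1/2). -/

import Mathlib

open scoped unitInterval

/-- The gluing relation on the square `[0,1] × [0,1]`: `(0, y)` is identified with
`(1, 1 - y)`. The Möbius band is the quotient by the equivalence relation generated by it. -/
def MobiusRel : I × I → I × I → Prop :=
  fun p q => p.1 = 0 ∧ q.1 = 1 ∧ q.2 = unitInterval.symm p.2

/-- The Möbius band, as the quotient of the square `[0,1] × [0,1]` by the equivalence
relation generated by identifying `(0, y)` with `(1, 1 - y)`, with the quotient topology. -/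
def MobiusBand : Type := Quot MobiusRel

instance : TopologicalSpace MobiusBand :=
  inferInstanceAs (TopologicalSpace (Quot MobiusRel))

/-- The midpoint `1/2` of the unit interval. -/
noncomputable def half : I := ⟨1 / 2, by norm_num⟩

/-- The base point of the Möbius band: the class of the point `(0, 1/2)`. -/
noncomputable def mobiusBase : MobiusBand := Quot.mk MobiusRel ((0 : I), half)

noncomputable section

namespace MobiusProof

open Complex Real

lemma circle_exp_arg (z : Circle) : Circle.exp (Complex.arg (z : ℂ)) = z := by
  ext
  rw [Circle.coe_exp]
  have h := Complex.norm_mul_exp_arg_mul_I (z : ℂ)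
  rwa [Circle.norm_coe, Complex.ofReal_one, one_mul] at h

lemma circle_exp_sum (s : Finset ℕ) (f : ℕ → ℝ) :
    Circle.exp (∑ j ∈ s, f j) = ∏ j ∈ s, Circle.exp (f j) := by
  classical
  induction s using Finset.induction with
  | empty => simp
  | insert _ _ h ih => rw [Finset.sum_insert h, Finset.prod_insert h, Circle.exp_add, ih]

lemma circle_mem_slitPlane {z : Circle} (hz : (z : ℂ) ≠ -1) :
    (z : ℂ) ∈ Complex.slitPlane := by
  rw [Complex.mem_slitPlane_iff]
  by_contra h
  push_neg at h
  obtain ⟨h1, h2⟩ := h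
  apply hz
  have habs : ‖(z : ℂ)‖ = 1 := Circle.norm_coe z
  have hre : (z : ℂ) = ((z : ℂ).re : ℂ) := Complex.ext rfl (by simp [h2])
  rw [hre, Complex.norm_real, Real.norm_eq_abs] at habs
  have : (z : ℂ).re = -1 := by
    rcases (abs_eq (by norm_num : (0:ℝ) ≤ 1)).mp habs with h | h
    · linarith
    · exact h
  rw [hre, this]
  norm_num

/-- scaling of a point of the square by `c ∈ I`. -/
def sqScale (c : I) (p : I × I) : I × I :=
  (⟨(c : ℝ) * p.1, unitInterval.mul_mem c.2 p.1.2⟩, ⟨(c : ℝ) * p.2, unitInterval.mul_mem c.2 p.2.2⟩)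

lemma continuous_sqScale (c : I) : Continuous (sqScale c) := by
  apply Continuous.prodMk <;> exact Continuous.subtype_mk (by fun_prop) _

/-- Every continuous map from the square to the circle lifts through `Circle.exp`. -/
theorem exists_lift_square (H : C(I × I, Circle)) :
    ∃ Λ : C(I × I, ℝ), ∀ p, Circle.exp (Λ p) = H p := by
  have hUC : UniformContinuous (fun p : I × I => H p) :=
    CompactSpace.uniformContinuous_of_continuous H.continuous
  obtain ⟨δ, δpos, hδ⟩ := Metric.uniformContinuous_iff.mp hUC 1 one_pos
  obtain ⟨N, hN⟩ := exists_nat_gt (1 / δ)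
  have hNpos : 0 < (N : ℝ) := lt_trans (by positivity) hN
  have hNδ : 1 / (N : ℝ) < δ := by
    rw [div_lt_iff₀ hNpos]
    rw [div_lt_iff₀ δpos] at hN
    linarith [hN]
  set c : ℕ → I := fun j => Set.projIcc 0 1 zero_le_one ((j : ℝ) / N) with hc
  have hcval : ∀ j : ℕ, j ≤ N → ((c j : ℝ)) = (j : ℝ) / N := by
    intro j hj
    simp only [hc]
    rw [Set.projIcc_of_mem]
    exact ⟨by positivity, by rw [div_le_one hNpos]; exact_mod_cast hj⟩
  set sg : ℕ → I × I → I × I := fun j => sqScale (c j) with hsg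
  -- the increments are small
  have hdist : ∀ j < N, ∀ p : I × I, dist (sg (j+1) p) (sg j p) < δ := by
    intro j hj p
    have h1 : ((c (j+1) : ℝ)) = ((j:ℝ)+1) / N := by
      have := hcval (j+1) hj
      push_cast at this ⊢
      linarith [this]
    have h2 : ((c j : ℝ)) = (j : ℝ) / N := hcval j (le_of_lt hj)
    have key : ∀ x : I, dist ((⟨(c (j+1) : ℝ) * x, unitInterval.mul_mem (c (j+1)).2 x.2⟩ : I))
        (⟨(c j : ℝ) * x, unitInterval.mul_mem (c j).2 x.2⟩ : I) < δ := by
      intro x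
      rw [Subtype.dist_eq]
      simp only [h1, h2, Real.dist_eq]
      have h3 : ((j:ℝ)+1) / N * x - (j:ℝ) / N * x = x / N := by ring
      rw [h3, _root_.abs_of_nonneg (div_nonneg x.2.1 (le_of_lt hNpos))]
      calc (x : ℝ) / N ≤ 1 / N := by gcongr; exact x.2.2
        _ < δ := hNδ
    rw [Prod.dist_eq]
    exact max_lt (key p.1) (key p.2)
  -- the ratios
  set r : ℕ → I × I → Circle := fun j p => H (sg (j+1) p) / H (sg j p) with hr
  have hrdist : ∀ j < N, ∀ p : I × I, dist (H (sg (j+1) p)) (H (sg j p)) < 1 := by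
    intro j hj p
    exact hδ (hdist j hj p)
  have hrne : ∀ j < N, ∀ p : I × I, ((r j p : ℂ)) ≠ -1 := by
    intro j hj p hcon
    have hb : (H (sg j p) : ℂ) ≠ 0 := Circle.coe_ne_zero _
    have h2 : (H (sg (j+1) p) : ℂ) = -(H (sg j p) : ℂ) := by
      have hq : (H (sg (j+1) p) : ℂ) / (H (sg j p) : ℂ) = -1 := by
        simp only [hr] at hcon
        rw [← Circle.coe_div]
        exact hcon
      rw [div_eq_iff hb] at hq
      linear_combination hq
    have h3 := hrdist j hj p
    rw [show dist (H (sg (j+1) p)) (H (sg j p)) = dist (H (sg (j+1) p) : ℂ) (H (sg j p) : ℂ) from rfl, Complex.dist_eq, h2] at h3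
    have h4 : -(H (sg j p) : ℂ) - (H (sg j p) : ℂ) = -2 * (H (sg j p) : ℂ) := by ring
    rw [h4, norm_mul, Circle.norm_coe, mul_one] at h3
    norm_num at h3
  -- auxiliary facts about the scalings
  have hsg0 : ∀ p : I × I, sg 0 p = ((0:I), (0:I)) := by
    intro p
    have h0 : ((c 0 : ℝ)) = 0 := by
      rw [hcval 0 (Nat.zero_le N)]; simp
    simp only [hsg, sqScale]
    ext
    · simp [h0]
    · simp [h0]
  have hsgN : ∀ p : I × I, sg N p = p := by
    intro p
    have h0 : ((c N : ℝ)) = 1 := by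
      rw [hcval N le_rfl, div_self (ne_of_gt hNpos)]
    simp only [hsg, sqScale]
    ext
    · simp [h0]
    · simp [h0]
  -- the lift
  set Λf : I × I → ℝ := fun p =>
    Complex.arg (H ((0:I),(0:I)) : ℂ) + ∑ j ∈ Finset.range N, Complex.arg ((r j p : ℂ)) with hΛf
  have hrc : ∀ j, Continuous fun p => ((r j p : ℂ)) := by
    intro j
    apply continuous_subtype_val.comp
    exact (H.continuous.comp (continuous_sqScale _)).div'
      (H.continuous.comp (continuous_sqScale _))
  have hcont : Continuous Λf := by
    apply Continuous.add continuous_const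
    apply continuous_finset_sum
    intro j hj
    rw [Finset.mem_range] at hj
    rw [continuous_iff_continuousAt]
    intro p
    exact ContinuousAt.comp (g := Complex.arg)
      (Complex.continuousAt_arg (circle_mem_slitPlane (hrne j hj p))) ((hrc j).continuousAt)
  refine ⟨⟨Λf, hcont⟩, fun p => ?_⟩
  show Circle.exp (Λf p) = H p
  rw [hΛf]
  simp only
  rw [Circle.exp_add, circle_exp_sum]
  have hterm : ∀ j ∈ Finset.range N, Circle.exp (Complex.arg ((r j p : ℂ))) = r j p :=
    fun j _ => circle_exp_arg _
  rw [Finset.prod_congr rfl hterm, circle_exp_arg]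
  have htel : ∏ j ∈ Finset.range N, r j p = H (sg N p) / H (sg 0 p) := by
    rw [hr]
    exact Finset.prod_range_div (fun j => H (sg j p)) N
  rw [htel, hsgN, hsg0]
  exact mul_div_cancel _ _

/-- Every path in the circle lifts through `Circle.exp`. -/
theorem exists_path_lift (γ : C(I, Circle)) :
    ∃ L : C(I, ℝ), ∀ t, Circle.exp (L t) = γ t := by
  obtain ⟨Λ, hΛ⟩ := exists_lift_square (γ.comp ⟨Prod.snd, continuous_snd⟩)
  exact ⟨Λ.comp ⟨fun t => ((0 : I), t), by fun_prop⟩, fun t => hΛ ((0 : I), t)⟩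

/-- A continuous function on `I` whose values are all integer multiples of `2π`
takes the same value at `1` and `0`. -/
theorem eq_of_int_valued {f : I → ℝ} (hf : Continuous f)
    (h : ∀ t, ∃ k : ℤ, f t = k * (2 * π)) (a b : I) : f a = f b := by
  obtain ⟨ka, hka⟩ := h a
  obtain ⟨kb, hkb⟩ := h b
  have hπ : 0 < π := Real.pi_pos
  by_contra hne
  have hint : ∀ (x y : I) (kx ky : ℤ), f x = kx * (2*π) → f y = ky * (2*π) →
      f x < f y → False := by
    intro x y kx ky hkx hky hlt
    have hkxy : kx < ky := by
      by_contra hle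
      push_neg at hle
      have : (ky : ℝ) ≤ kx := by exact_mod_cast hle
      nlinarith
    have hc1 : f x ≤ kx * (2*π) + π := by rw [hkx]; linarith
    have hc2 : (kx : ℝ) * (2*π) + π ≤ f y := by
      rw [hky]
      have : (kx : ℝ) + 1 ≤ ky := by exact_mod_cast hkxy
      nlinarith
    have hmem : (kx : ℝ) * (2*π) + π ∈ Set.Icc (f x) (f y) := ⟨hc1, hc2⟩
    have hsub := intermediate_value_univ x y hf
    obtain ⟨t, ht⟩ := hsub hmem
    obtain ⟨k, hk⟩ := h t
    rw [hk] at ht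
    have : ((2*k : ℤ) : ℝ) * π = ((2*kx + 1 : ℤ) : ℝ) * π := by push_cast; linarith
    have h2 : (2*k : ℤ) = 2*kx + 1 := by
      have := mul_right_cancel₀ (ne_of_gt hπ) this
      exact_mod_cast this
    omega
  rcases lt_trichotomy (f a) (f b) with hlt | heq | hlt
  · exact hint a b ka kb hka hkb hlt
  · exact hne heq
  · exact hint b a kb ka hkb hka hlt

/-- being a lift -/
def IsLift (γ : C(I, Circle)) (L : C(I, ℝ)) : Prop := ∀ t, Circle.exp (L t) = γ t

theorem wind_eq_of_lifts {γ : C(I, Circle)} {L L' : C(I, ℝ)}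
    (h : IsLift γ L) (h' : IsLift γ L') : L 1 - L 0 = L' 1 - L' 0 := by
  have key : ∀ t, ∃ k : ℤ, L t - L' t = k * (2 * π) := by
    intro t
    have : Circle.exp (L t - L' t) = 1 := by
      rw [Circle.exp_sub, h t, h' t, div_self']
    exact Circle.exp_eq_one.mp this
  have := eq_of_int_valued (f := fun t => L t - L' t)
    (L.continuous.sub L'.continuous) key 1 0
  linarith

/-- The (real) winding number of a loop at `1` in the circle. -/
noncomputable def windR (γ : Path (1 : Circle) 1) : ℝ :=
  (exists_path_lift γ.toContinuousMap).choose 1 - (exists_path_lift γ.toContinuousMap).choose 0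

lemma windR_eq {γ : Path (1 : Circle) 1} {L : C(I, ℝ)} (h : IsLift γ.toContinuousMap L) :
    windR γ = L 1 - L 0 :=
  wind_eq_of_lifts (exists_path_lift γ.toContinuousMap).choose_spec h

lemma windR_int (γ : Path (1 : Circle) 1) : ∃ k : ℤ, windR γ = k * (2 * π) := by
  set L := (exists_path_lift γ.toContinuousMap).choose with hL
  have hspec : IsLift γ.toContinuousMap L := (exists_path_lift γ.toContinuousMap).choose_spec
  have : Circle.exp (L 1 - L 0) = 1 := by
    rw [Circle.exp_sub, hspec 1, hspec 0]
    show (γ 1) / (γ 0) = 1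
    rw [γ.source, γ.target, div_self']
  exact Circle.exp_eq_one.mp this

/-- The integer winding number. -/
noncomputable def windZ (γ : Path (1 : Circle) 1) : ℤ := (windR_int γ).choose

lemma windZ_spec (γ : Path (1 : Circle) 1) : windR γ = windZ γ * (2 * π) :=
  (windR_int γ).choose_spec

lemma windZ_eq_of_windR {γ γ' : Path (1 : Circle) 1} (h : windR γ = windR γ') :
    windZ γ = windZ γ' := by
  have hπ := Real.pi_pos
  have h1 : (windZ γ : ℝ) * (2 * π) = (windZ γ' : ℝ) * (2 * π) := by
    rw [← windZ_spec γ, h, windZ_spec γ']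
  have h2 := mul_right_cancel₀ (by positivity : (2 * π : ℝ) ≠ 0) h1
  exact_mod_cast h2

/-- Homotopy invariance of the winding number. -/
theorem windR_homotopic {γ₀ γ₁ : Path (1 : Circle) 1} (h : γ₀.Homotopic γ₁) :
    windR γ₀ = windR γ₁ := by
  obtain ⟨F⟩ := h
  obtain ⟨Λ, hΛ⟩ := exists_lift_square F.toContinuousMap
  have hF0 : ∀ s : I, F.toContinuousMap (s, 0) = 1 := fun s => F.source s
  have hF1 : ∀ s : I, F.toContinuousMap (s, 1) = 1 := fun s => F.target s
  -- the endpoint difference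
  have hD : ∀ s, ∃ k : ℤ, Λ (s, 1) - Λ (s, 0) = k * (2 * π) := by
    intro s
    apply Circle.exp_eq_one.mp
    rw [Circle.exp_sub, hΛ (s, 1), hΛ (s, 0), hF0, hF1, div_self']
  have hDc : Continuous fun s : I => Λ (s, 1) - Λ (s, 0) := by fun_prop
  have hconst := eq_of_int_valued hDc hD 0 1
  have hL0 : IsLift γ₀.toContinuousMap (Λ.comp ⟨fun t => ((0:I), t), by fun_prop⟩) := by
    intro t
    show Circle.exp (Λ ((0:I), t)) = _
    rw [hΛ ((0:I), t)]
    exact F.apply_zero t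
  have hL1 : IsLift γ₁.toContinuousMap (Λ.comp ⟨fun t => ((1:I), t), by fun_prop⟩) := by
    intro t
    show Circle.exp (Λ ((1:I), t)) = _
    rw [hΛ ((1:I), t)]
    exact F.apply_one t
  rw [windR_eq hL0, windR_eq hL1]
  simpa using hconst

/-- Additivity of the winding number under concatenation. -/
theorem windR_trans (γ γ' : Path (1 : Circle) 1) :
    windR (γ.trans γ') = windR γ + windR γ' := by
  obtain ⟨L, hL⟩ := exists_path_lift γ.toContinuousMap
  obtain ⟨L', hL'⟩ := exists_path_lift γ'.toContinuousMap
  set A : ℝ → ℝ := fun u => L (Set.projIcc 0 1 zero_le_one u) with hA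
  set B : ℝ → ℝ := fun u => L' (Set.projIcc 0 1 zero_le_one u) with hB
  have hAc : Continuous A := L.continuous.comp continuous_projIcc
  have hBc : Continuous B := L'.continuous.comp continuous_projIcc
  set M : I → ℝ := fun t => if (t : ℝ) ≤ 1/2 then A (2 * t) else B (2 * t - 1) + (A 1 - B 0)
    with hM
  have hMc : Continuous M := by
    apply Continuous.if_le
    · exact hAc.comp (by fun_prop)
    · exact (hBc.comp (by fun_prop)).add continuous_const
    · fun_prop
    · fun_prop
    · intro t ht
      rw [ht]
      norm_num
  have hexpA1 : Circle.exp (A 1) = 1 := by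
    rw [hA]
    simp only [Set.projIcc_right]
    have := hL ⟨1, by norm_num⟩
    rw [this]
    exact γ.target
  have hexpB0 : Circle.exp (B 0) = 1 := by
    rw [hB]
    simp only [Set.projIcc_left]
    have := hL' ⟨0, by norm_num⟩
    rw [this]
    exact γ'.source
  have hMlift : IsLift (γ.trans γ').toContinuousMap ⟨M, hMc⟩ := by
    intro t
    show Circle.exp (M t) = (γ.trans γ') t
    rw [Path.trans_apply, hM]
    simp only
    split_ifs with h
    · have hmem : 2 * (t:ℝ) ∈ Set.Icc (0:ℝ) 1 := ⟨mul_nonneg (by norm_num) t.2.1, by linarith⟩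
      rw [hA]
      simp only [Set.projIcc_of_mem zero_le_one hmem]
      exact hL _
    · have hmem : 2 * (t:ℝ) - 1 ∈ Set.Icc (0:ℝ) 1 := ⟨by push_neg at h; linarith, by
        have := t.2.2; linarith⟩
      rw [Circle.exp_add, Circle.exp_sub, hexpA1, hexpB0, hB]
      simp only [Set.projIcc_of_mem zero_le_one hmem]
      rw [hL' _, div_self', mul_one]
      rfl
  have h1 : M 1 = B 1 + (A 1 - B 0) := by
    rw [hM]
    norm_num
  have h0 : M 0 = A 0 := by
    rw [hM]
    norm_num
  have hwt : windR (γ.trans γ') = M 1 - M 0 := windR_eq hMlift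
  have hw : windR γ = L 1 - L 0 := windR_eq hL
  have hw' : windR γ' = L' 1 - L' 0 := windR_eq hL'
  have hA1 : A 1 = L 1 := by rw [hA]; simp [Set.projIcc_right]
  have hA0 : A 0 = L 0 := by rw [hA]; simp [Set.projIcc_left]
  have hB1 : B 1 = L' 1 := by rw [hB]; simp [Set.projIcc_right]
  have hB0 : B 0 = L' 0 := by rw [hB]; simp [Set.projIcc_left]
  rw [hwt, h1, h0, hA1, hA0, hB1, hB0, hw, hw']
  ring

/-- The standard loop of winding number `n`. -/
noncomputable def loopN (n : ℤ) : Path (1 : Circle) 1 where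
  toFun t := Circle.exp ((n : ℝ) * (2 * π) * t)
  continuous_toFun := Circle.exp.continuous.comp (by fun_prop)
  source' := by simp
  target' := by
    apply Circle.exp_eq_one.mpr
    exact ⟨n, by push_cast; ring⟩

lemma windR_loopN (n : ℤ) : windR (loopN n) = n * (2 * π) := by
  have hlift : IsLift (loopN n).toContinuousMap
      ⟨fun t => (n : ℝ) * (2 * π) * t, by fun_prop⟩ := fun t => rfl
  rw [windR_eq hlift]
  show (n : ℝ) * (2 * π) * 1 - (n : ℝ) * (2 * π) * 0 = _
  ring

lemma windZ_loopN (n : ℤ) : windZ (loopN n) = n := by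
  have h := windZ_spec (loopN n)
  rw [windR_loopN n] at h
  have h2 := mul_right_cancel₀ (by positivity : (2 * π : ℝ) ≠ 0) h.symm
  exact_mod_cast h2

/-- A loop with vanishing winding number is null-homotopic. -/
theorem homotopic_refl_of_windR {γ : Path (1 : Circle) 1} (h : windR γ = 0) :
    γ.Homotopic (Path.refl 1) := by
  obtain ⟨L, hL⟩ := exists_path_lift γ.toContinuousMap
  have hL10 : L 1 = L 0 := by
    have := windR_eq hL
    rw [h] at this
    linarith
  have hexpL0 : Circle.exp (L 0) = 1 := by rw [hL 0]; exact γ.source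
  refine ⟨⟨⟨⟨fun p => Circle.exp ((1 - (p.1 : ℝ)) * L p.2 + (p.1 : ℝ) * L 0), ?_⟩, ?_, ?_⟩, ?_⟩⟩
  · exact Circle.exp.continuous.comp (by fun_prop)
  · intro t
    simp only
    norm_num
    exact hL t
  · intro t
    simp only
    norm_num
    exact hexpL0
  · intro s x hx
    simp only [Set.mem_insert_iff, Set.mem_singleton_iff] at hx
    rcases hx with rfl | rfl
    · show Circle.exp ((1 - (s : ℝ)) * L 0 + (s : ℝ) * L 0) = _
      have : (1 - (s : ℝ)) * L 0 + (s : ℝ) * L 0 = L 0 := by ring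
      rw [this, hexpL0]
      simp [γ.source]
    · show Circle.exp ((1 - (s : ℝ)) * L 1 + (s : ℝ) * L 0) = _
      rw [hL10]
      have : (1 - (s : ℝ)) * L 0 + (s : ℝ) * L 0 = L 0 := by ring
      rw [this, hexpL0]
      simp [γ.target]

lemma windZ_trans (γ γ' : Path (1 : Circle) 1) :
    windZ (γ.trans γ') = windZ γ + windZ γ' := by
  have h1 : (windZ (γ.trans γ') : ℝ) * (2 * π) = ((windZ γ + windZ γ' : ℤ) : ℝ) * (2 * π) := by
    rw [← windZ_spec, windR_trans, windZ_spec, windZ_spec]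
    push_cast
    ring
  have h2 := mul_right_cancel₀ (by positivity : (2 * π : ℝ) ≠ 0) h1
  exact_mod_cast h2

lemma windZ_refl : windZ (Path.refl (1 : Circle)) = 0 := by
  have hlift : IsLift (Path.refl (1 : Circle)).toContinuousMap
      ⟨fun _ => (0 : ℝ), continuous_const⟩ := fun t => by
    simp [Path.refl]
  have h : windR (Path.refl (1 : Circle)) = 0 := by
    rw [windR_eq hlift]; simp
  have h1 := windZ_spec (Path.refl (1 : Circle))
  rw [h] at h1
  have hπ := Real.pi_pos
  have : (windZ (Path.refl (1 : Circle)) : ℝ) = 0 := by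
    by_contra hc
    have := mul_ne_zero hc (by positivity : (2 * π : ℝ) ≠ 0)
    exact this h1.symm
  exact_mod_cast this

lemma windZ_homotopic {γ γ' : Path (1 : Circle) 1} (h : γ.Homotopic γ') :
    windZ γ = windZ γ' :=
  windZ_eq_of_windR (windR_homotopic h)

attribute [local instance] Path.Homotopic.setoid

open CategoryTheory

/-- Winding number on homotopy classes. -/
noncomputable def windQ : Path.Homotopic.Quotient (1 : Circle) (1 : Circle) → ℤ :=
  Quotient.lift windZ fun _ _ h => windZ_homotopic h

lemma windQ_mk (γ : Path (1 : Circle) 1) :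
    windQ (Quotient.mk (Path.Homotopic.setoid 1 1) γ) = windZ γ := rfl

lemma windQ_comp (a b : Path.Homotopic.Quotient (1 : Circle) (1 : Circle)) :
    windQ (a.trans b) = windQ a + windQ b := by
  induction a using Quotient.inductionOn with | h p =>
  induction b using Quotient.inductionOn with | h q =>
  show windZ (p.trans q) = windZ p + windZ q
  exact windZ_trans p q

/-- The winding number as a homomorphism on the fundamental group of the circle. -/
noncomputable def windHom : FundamentalGroup Circle 1 →* Multiplicative ℤ where
  toFun x := Multiplicative.ofAdd (windQ (FundamentalGroup.toPath x))
  map_one' := by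
    show Multiplicative.ofAdd
      (windQ (Quotient.mk (Path.Homotopic.setoid 1 1) (Path.refl 1))) = 1
    rw [windQ_mk, windZ_refl]
    rfl
  map_mul' x y := by
    show Multiplicative.ofAdd (windQ ((FundamentalGroup.toPath y).trans (FundamentalGroup.toPath x))) = _
    rw [windQ_comp, add_comm]
    rfl

lemma windHom_injective : Function.Injective windHom := by
  rw [injective_iff_map_eq_one]
  intro x hx
  obtain ⟨p, hp⟩ := Quotient.exists_rep (FundamentalGroup.toPath x)
  have hz : windZ p = 0 := by
    have h0 : windQ (FundamentalGroup.toPath x) = 0 := by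
      have := congrArg Multiplicative.toAdd hx
      simpa [windHom] using this
    rw [← hp] at h0
    exact h0
  have hr : windR p = 0 := by rw [windZ_spec, hz]; simp
  have hhom : FundamentalGroup.toPath x = 𝟙 (FundamentalGroupoid.mk (1 : Circle)) := by
    rw [← hp]
    show _ = (Quotient.mk (Path.Homotopic.setoid 1 1) (Path.refl 1) :
      Path.Homotopic.Quotient (1 : Circle) 1)
    exact Quotient.sound (homotopic_refl_of_windR hr)
  show x = 𝟙 _
  exact hhom

lemma windHom_surjective : Function.Surjective windHom := by
  intro g
  set a : Path.Homotopic.Quotient (1 : Circle) 1 :=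
    Quotient.mk (Path.Homotopic.setoid 1 1) (loopN (Multiplicative.toAdd g)) with ha
  refine ⟨a, ?_⟩
  show Multiplicative.ofAdd (windQ a) = g
  rw [ha, windQ_mk, windZ_loopN]
  rfl

/-- The fundamental group of the circle is `ℤ`. -/
noncomputable def circleFundamentalGroupEquiv :
    FundamentalGroup Circle 1 ≃* Multiplicative ℤ :=
  MulEquiv.ofBijective windHom ⟨windHom_injective, windHom_surjective⟩

/-! ### The homotopy equivalence between the Möbius band and the circle -/

/-- The map from the Möbius band to the circle. -/
def fM : MobiusBand → Circle :=
  Quot.lift (fun p : I × I => Circle.exp (2 * π * p.1))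
    (by
      rintro p q ⟨hp1, hq1, hq2⟩
      show Circle.exp (2 * π * (p.1 : ℝ)) = Circle.exp (2 * π * (q.1 : ℝ))
      rw [hp1, hq1]
      show Circle.exp (2 * π * (0:ℝ)) = Circle.exp (2 * π * (1:ℝ))
      rw [mul_zero, mul_one, Circle.exp_zero, Circle.exp_two_pi])

lemma continuous_fM : Continuous fM := by
  apply continuous_quot_lift
  exact Circle.exp.continuous.comp (by fun_prop)

/-- The projection of a real number to the centre circle of the band. -/
def fProj : ℝ → MobiusBand :=
  fun x => Quot.mk MobiusRel (Set.projIcc 0 1 zero_le_one x, half)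

lemma continuous_fProj : Continuous fProj :=
  continuous_quot_mk.comp (continuous_projIcc.prodMk continuous_const)

lemma half_symm : unitInterval.symm half = half := by
  ext
  show 1 - (1/2 : ℝ) = 1/2
  norm_num

lemma fProj_zero_eq_one : fProj 0 = fProj 1 := by
  apply Quot.sound
  refine ⟨?_, ?_, half_symm.symm⟩
  · ext; simp
  · ext; simp

/-- The map from `AddCircle (2π)` to the Möbius band. -/
def gAdd : AddCircle (2 * π) → MobiusBand :=
  haveI : Fact (0 < 2 * π) := ⟨by positivity⟩
  AddCircle.liftIco (2 * π) 0 (fun x => fProj (x / (2 * π)))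

lemma continuous_gAdd : Continuous gAdd := by
  haveI : Fact (0 < 2 * π) := ⟨by positivity⟩
  apply AddCircle.liftIco_continuous
  · simp only [zero_div, zero_add, div_self (by positivity : (2*π : ℝ) ≠ 0)]
    exact fProj_zero_eq_one
  · exact (continuous_fProj.comp (by fun_prop)).continuousOn

/-- The map from the circle to the Möbius band. -/
def gC : Circle → MobiusBand := gAdd ∘ AddCircle.homeomorphCircle'.symm

lemma continuous_gC : Continuous gC :=
  continuous_gAdd.comp AddCircle.homeomorphCircle'.symm.continuous

lemma fM_gAdd (z : AddCircle (2 * π)) : fM (gAdd z) = AddCircle.homeomorphCircle' z := by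
  haveI : Fact (0 < 2 * π) := ⟨by positivity⟩
  have hex : ∃ x ∈ Set.Ico (0:ℝ) (0 + 2*π), (x : AddCircle (2*π)) = z := by
    have him := AddCircle.coe_image_Ico_eq (2*π) 0
    have hz : z ∈ ((↑) : ℝ → AddCircle (2*π)) '' Set.Ico 0 (0+2*π) := by
      rw [him]; trivial
    obtain ⟨x, hx1, hx2⟩ := hz
    exact ⟨x, hx1, hx2⟩
  obtain ⟨x, hx, rfl⟩ := hex
  rw [gAdd, AddCircle.liftIco_coe_apply hx, AddCircle.homeomorphCircle'_apply_mk]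
  have hmem : x / (2*π) ∈ Set.Icc (0:ℝ) 1 := by
    rw [Set.mem_Ico, zero_add] at hx
    constructor
    · exact div_nonneg hx.1 (by positivity)
    · rw [div_le_one (by positivity)]
      exact le_of_lt hx.2
  show Circle.exp (2 * π * ((Set.projIcc 0 1 zero_le_one (x / (2*π))) : ℝ)) = Circle.exp x
  rw [Set.projIcc_of_mem zero_le_one hmem]
  congr 1
  field_simp

lemma fProj_coe (x : I) : fProj (x : ℝ) = Quot.mk MobiusRel (x, half) := by
  unfold fProj
  congr 1
  rw [Prod.ext_iff]
  refine ⟨?_, rfl⟩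
  rw [Set.projIcc_of_mem zero_le_one x.2]

lemma fM_mk (p : I × I) : fM (Quot.mk MobiusRel p) = Circle.exp (2 * π * (p.1 : ℝ)) := rfl

lemma gC_fM (p : I × I) : gC (fM (Quot.mk MobiusRel p)) = Quot.mk MobiusRel (p.1, half) := by
  haveI : Fact (0 < 2 * π) := ⟨by positivity⟩
  have h2 : AddCircle.homeomorphCircle'.symm (Circle.exp (2 * π * (p.1 : ℝ)))
      = ((2 * π * (p.1 : ℝ) : ℝ) : AddCircle (2 * π)) := by
    rw [← AddCircle.homeomorphCircle'_apply_mk (2 * π * (p.1 : ℝ)),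
      Homeomorph.symm_apply_apply]
  show gAdd (AddCircle.homeomorphCircle'.symm (fM (Quot.mk MobiusRel p))) = _
  rw [fM_mk, h2]
  rcases lt_or_eq_of_le p.1.2.2 with hlt | heq
  · have hmem : 2 * π * (p.1 : ℝ) ∈ Set.Ico (0:ℝ) (0 + 2 * π) := by
      constructor
      · have := p.1.2.1; positivity
      · rw [zero_add]
        nlinarith [Real.pi_pos]
    rw [gAdd, AddCircle.liftIco_coe_apply hmem]
    have hdiv : (2 * π * (p.1 : ℝ)) / (2 * π) = (p.1 : ℝ) := by field_simp
    rw [hdiv, fProj_coe]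
  · have hx1 : (p.1 : ℝ) = 1 := heq
    have hp1 : p.1 = (1 : I) := Subtype.ext hx1
    rw [hx1, mul_one]
    have hper : ((2 * π : ℝ) : AddCircle (2 * π)) = ((0 : ℝ) : AddCircle (2 * π)) := by
      rw [AddCircle.coe_period, QuotientAddGroup.mk_zero]
    have hmem0 : (0:ℝ) ∈ Set.Ico (0:ℝ) (0 + 2 * π) := ⟨le_refl 0, by rw [zero_add]; positivity⟩
    rw [hper, gAdd, AddCircle.liftIco_coe_apply hmem0, zero_div, fProj_zero_eq_one]
    have h1 : fProj ((1:I) : ℝ) = Quot.mk MobiusRel ((1:I), half) := fProj_coe 1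
    rw [show ((1:I):ℝ) = (1:ℝ) from rfl] at h1
    rw [h1, hp1]

lemma fM_gC (z : Circle) : fM (gC z) = z := by
  show fM (gAdd (AddCircle.homeomorphCircle'.symm z)) = z
  rw [fM_gAdd, Homeomorph.apply_symm_apply]

/-- the straight-line deformation of the square onto its middle horizontal line -/
def linHalf (s y : I) : I :=
  ⟨(1 - (s : ℝ)) * (1/2) + (s : ℝ) * y, by
    constructor
    · nlinarith [s.2.1, s.2.2, y.2.1]
    · nlinarith [s.2.1, s.2.2, y.2.1, y.2.2]⟩

lemma linHalf_symm (s y : I) :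
    linHalf s (unitInterval.symm y) = unitInterval.symm (linHalf s y) := by
  ext
  show (1 - (s:ℝ)) * (1/2) + s * (1 - (y:ℝ)) = 1 - ((1 - (s:ℝ)) * (1/2) + s * y)
  ring

/-- The deformation retraction of the Möbius band onto its core circle. -/
def defRet : I × MobiusBand → MobiusBand := fun q =>
  Quot.liftOn q.2 (fun p => Quot.mk MobiusRel (p.1, linHalf q.1 p.2))
    (by
      rintro p p' ⟨hp1, hq1, hq2⟩
      apply Quot.sound
      exact ⟨hp1, hq1, by rw [hq2, linHalf_symm]⟩)

lemma continuous_defRet : Continuous defRet := by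
  apply (isQuotientMap_quot_mk (r := MobiusRel)).continuous_lift_prod_right
  show Continuous fun q : I × (I × I) => Quot.mk MobiusRel (q.2.1, linHalf q.1 q.2.2)
  apply continuous_quot_mk.comp
  apply Continuous.prodMk
  · fun_prop
  · apply Continuous.subtype_mk
    fun_prop

/-- `fM` as a bundled continuous map. -/
def fMc : C(MobiusBand, Circle) := ⟨fM, continuous_fM⟩
/-- `gC` as a bundled continuous map. -/
def gCc : C(Circle, MobiusBand) := ⟨gC, continuous_gC⟩

/-- The homotopy between `gC ∘ fM` and the identity of the Möbius band. -/
def homotopyGF : ContinuousMap.Homotopy (gCc.comp fMc) (ContinuousMap.id MobiusBand) where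
  toFun := defRet
  continuous_toFun := continuous_defRet
  map_zero_left m := by
    induction m using Quot.ind with | _ p =>
    show Quot.mk MobiusRel (p.1, linHalf 0 p.2) = gC (fM (Quot.mk MobiusRel p))
    rw [gC_fM]
    congr 1
    rw [Prod.ext_iff]
    refine ⟨rfl, ?_⟩
    ext
    show (1 - ((0:I):ℝ)) * (1/2) + ((0:I):ℝ) * p.2 = ((half : I) : ℝ)
    show (1 - (0:ℝ)) * (1/2) + (0:ℝ) * p.2 = (1/2 : ℝ)
    ring
  map_one_left m := by
    induction m using Quot.ind with | _ p =>
    show Quot.mk MobiusRel (p.1, linHalf 1 p.2) = Quot.mk MobiusRel p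
    congr 1
    rw [Prod.ext_iff]
    refine ⟨rfl, ?_⟩
    ext
    show (1 - ((1:I):ℝ)) * (1/2) + ((1:I):ℝ) * p.2 = (p.2 : ℝ)
    show (1 - (1:ℝ)) * (1/2) + (1:ℝ) * p.2 = (p.2 : ℝ)
    ring

/-- The Möbius band is homotopy equivalent to the circle. -/
def mobiusHomotopyEquiv : ContinuousMap.HomotopyEquiv MobiusBand Circle where
  toFun := fMc
  invFun := gCc
  left_inv := ⟨homotopyGF⟩
  right_inv := by
    have h : fMc.comp gCc = ContinuousMap.id Circle := ContinuousMap.ext fM_gC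
    rw [h]

/-! ### Assembly -/

lemma fM_base : fM mobiusBase = 1 := by
  show Circle.exp (2 * π * ((0:I) : ℝ)) = 1
  show Circle.exp (2 * π * (0 : ℝ)) = 1
  rw [mul_zero, Circle.exp_zero]

/-- The equivalence of fundamental groupoids. -/
noncomputable def fgEquiv := FundamentalGroupoidFunctor.equivOfHomotopyEquiv
  (X := TopCat.of MobiusBand) (Y := TopCat.of Circle) mobiusHomotopyEquiv

lemma fgEquiv_obj :
    fgEquiv.functor.obj (FundamentalGroupoid.mk mobiusBase) =
      FundamentalGroupoid.mk (1 : Circle) := by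
  show FundamentalGroupoid.mk (fM mobiusBase) = FundamentalGroupoid.mk (1 : Circle)
  rw [fM_base]

/-- The fundamental group of the Möbius band is `ℤ`. -/
noncomputable def mobiusEquivInt :
    FundamentalGroup MobiusBand mobiusBase ≃* Multiplicative ℤ :=
  ((fgEquiv.fullyFaithfulFunctor.mulEquivEnd (C := FundamentalGroupoid MobiusBand)
      (FundamentalGroupoid.mk mobiusBase)).trans
    (CategoryTheory.eqToIso (C := FundamentalGroupoid Circle) fgEquiv_obj).conj).trans
      circleFundamentalGroupEquiv

end MobiusProof

/-- The fundamental group of the Möbius band (based at the class of `(0, 1/2)`) is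
isomorphic to the additive group of integers. -/
theorem mobiusBand_fundamentalGroup_iso_int :
    Nonempty (FundamentalGroup MobiusBand mobiusBase ≃* Multiplicative ℤ) := by
  exact ⟨MobiusProof.mobiusEquivInt⟩
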